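/- In the setting of the suboptimality inequality suppose additionally that Π, X, γ, r, μ₀, λ are fixed and that for each n ∈ ℕ we have, for every π ∈ Π, kernels κ_π (independent of n) and η_{π,n}, and nonnegative bounded measurable uncertainty functions u_{π,n} with |∫ V_{κ_π} dη_{π,n}(x,·) − ∫ V_{κ_π} dκ_π(x,·)| ≤ u_{π,n}(x) for all x, and that π̂_n maximizes the penalized objective J̃_n(π) := Σ_t γ^t ∫ (r − λ·u_{π,n}) dμ^{η_{π,n}}_t over Π. Let π⋆ ∈ Π satisfy J(κ_{π⋆}) ≥ J(κ_π) for all π ∈ Π. If ε_n := Σ_t γ^t ∫ u_{π⋆,n} dμ^{η_{π⋆,n}}_t → 0 as n → ∞, then J(κ_{π̂_n}) → J(κ_{π⋆}). -/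

import Mathlib

open MeasureTheory ProbabilityTheory Filter

/-- The `n`-step transition kernel of a time-homogeneous Markov chain with one-step
kernel `κ`; under the Ionescu–Tulcea trajectory measure `P^κ_x`, the law of `X n` is
`kIter κ n x`. -/
noncomputable def kIter {X : Type*} [MeasurableSpace X] (κ : Kernel X X) : ℕ → Kernel X X
  | 0 => Kernel.id
  | n + 1 => κ ∘ₖ kIter κ n

/-- The discounted value `V_κ(x) = Σ_{n≥0} γ^n E_{P^κ_x}[r(X_n)]`. -/
noncomputable def discVal {X : Type*} [MeasurableSpace X] (κ : Kernel X X) (γ : ℝ)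
    (r : X → ℝ) (x : X) : ℝ :=
  ∑' n : ℕ, γ ^ n * ∫ y, r y ∂(kIter κ n x)

/-- The objective `J(κ) = ∫ V_κ dμ₀`. -/
noncomputable def discJ {X : Type*} [MeasurableSpace X] (κ : Kernel X X) (γ : ℝ)
    (r : X → ℝ) (μ₀ : Measure X) : ℝ :=
  ∫ x, discVal κ γ r x ∂μ₀

/-- The law `μ^η_t` of `X_t` under the `η`-chain started from `μ₀`. -/
noncomputable def marginal {X : Type*} [MeasurableSpace X] (η : Kernel X X)
    (μ₀ : Measure X) (t : ℕ) : Measure X :=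
  μ₀.bind (kIter η t)

section Aux

variable {X : Type*} [MeasurableSpace X]

lemma kIter_zero (κ : Kernel X X) : kIter κ 0 = Kernel.id := rfl

lemma kIter_succ (κ : Kernel X X) (n : ℕ) : kIter κ (n + 1) = κ ∘ₖ kIter κ n := rfl

instance kIter_markov (κ : Kernel X X) [IsMarkovKernel κ] (n : ℕ) :
    IsMarkovKernel (kIter κ n) := by
  induction n with
  | zero => rw [kIter_zero]; infer_instance
  | succ n ih => rw [kIter_succ]; exact Kernel.IsMarkovKernel.comp κ (kIter κ n)

lemma kIter_succ' (κ : Kernel X X) [IsMarkovKernel κ] (n : ℕ) :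
    kIter κ (n + 1) = kIter κ n ∘ₖ κ := by
  induction n with
  | zero => rw [kIter_succ, kIter_zero, Kernel.comp_id, Kernel.id_comp]
  | succ n ih =>
      calc kIter κ (n + 2) = κ ∘ₖ kIter κ (n + 1) := rfl
        _ = κ ∘ₖ (kIter κ n ∘ₖ κ) := by rw [ih]
        _ = (κ ∘ₖ kIter κ n) ∘ₖ κ := by rw [Kernel.comp_assoc]
        _ = kIter κ (n + 1) ∘ₖ κ := rfl

lemma measurable_kint (κ : Kernel X X) [IsSFiniteKernel κ] {f : X → ℝ} (hf : Measurable f) :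
    Measurable fun x => ∫ y, f y ∂κ x :=
  (MeasureTheory.StronglyMeasurable.integral_kernel_prod_right
    (κ := κ) (f := fun (_ : X) y => f y)
    ((hf.comp measurable_snd).stronglyMeasurable)).measurable

lemma integrable_of_abs_le (ν : Measure X) [IsFiniteMeasure ν] {f : X → ℝ}
    (hf : AEStronglyMeasurable f ν) {C : ℝ} (hC : ∀ x, |f x| ≤ C) : Integrable f ν :=
  Integrable.mono' (integrable_const C) hf
    (Filter.Eventually.of_forall fun x => by simpa [Real.norm_eq_abs] using hC x)

lemma integrable_of_bounds (ν : Measure X) [IsFiniteMeasure ν] {f : X → ℝ}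
    (hf : AEStronglyMeasurable f ν) {C : ℝ} (h0 : ∀ x, 0 ≤ f x) (hC : ∀ x, f x ≤ C) :
    Integrable f ν :=
  integrable_of_abs_le ν hf (fun x => by rw [abs_of_nonneg (h0 x)]; exact hC x)

lemma integral_le_of_bounds (ν : Measure X) [IsProbabilityMeasure ν] {f : X → ℝ}
    (hf : AEStronglyMeasurable f ν) {C : ℝ} (h0 : ∀ x, 0 ≤ f x) (hC : ∀ x, f x ≤ C) :
    ∫ x, f x ∂ν ≤ C := by
  calc ∫ x, f x ∂ν ≤ ∫ _, C ∂ν :=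
        integral_mono (integrable_of_bounds ν hf h0 hC) (integrable_const C) hC
    _ = C := by simp

/-- Bochner-integral version of `Measure.lintegral_bind`, for nonnegative bounded
measurable integrands. -/
lemma integral_bind' (μ : Measure X) (k : Kernel X X) [IsMarkovKernel k] {f : X → ℝ}
    (hf : Measurable f) (h0 : ∀ x, 0 ≤ f x) {C : ℝ} (hC : ∀ x, f x ≤ C) :
    ∫ y, f y ∂(μ.bind k) = ∫ x, ∫ y, f y ∂(k x) ∂μ := by
  have hint : ∀ x : X, Integrable f (k x) := fun x =>
    integrable_of_bounds _ hf.aestronglyMeasurable h0 hC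
  rw [integral_eq_lintegral_of_nonneg_ae (Filter.Eventually.of_forall h0)
    hf.aestronglyMeasurable,
    Measure.lintegral_bind k.measurable.aemeasurable hf.ennreal_ofReal.aemeasurable,
    integral_eq_lintegral_of_nonneg_ae
      (Filter.Eventually.of_forall fun x => integral_nonneg h0)
      (measurable_kint k hf).aestronglyMeasurable]
  congr 1
  refine lintegral_congr fun x => ?_
  rw [← ofReal_integral_eq_lintegral_ofReal (hint x) (Filter.Eventually.of_forall h0)]

lemma isProbabilityMeasure_bind (μ : Measure X) [IsProbabilityMeasure μ] (k : Kernel X X)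
    [IsMarkovKernel k] : IsProbabilityMeasure (μ.bind k) := by
  constructor
  rw [Measure.bind_apply MeasurableSet.univ k.measurable.aemeasurable]
  simp

instance marginal_prob (η : Kernel X X) [IsMarkovKernel η] (μ₀ : Measure X)
    [IsProbabilityMeasure μ₀] (t : ℕ) : IsProbabilityMeasure (marginal η μ₀ t) :=
  isProbabilityMeasure_bind μ₀ (kIter η t)

lemma marginal_zero (η : Kernel X X) (μ₀ : Measure X) : marginal η μ₀ 0 = μ₀ := by
  unfold marginal
  rw [kIter_zero]
  have h : ⇑(Kernel.id : Kernel X X) = Measure.dirac := funext fun x => Kernel.id_apply x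
  rw [h, Measure.bind_dirac]

lemma marginal_succ (η : Kernel X X) [IsMarkovKernel η] (μ₀ : Measure X) (t : ℕ) :
    marginal η μ₀ (t + 1) = (marginal η μ₀ t).bind η := by
  unfold marginal
  rw [kIter_succ, Measure.bind_bind (kIter η t).measurable.aemeasurable η.measurable.aemeasurable]
  exact congrArg μ₀.bind (funext fun a => Kernel.comp_apply η (kIter η t) a)

lemma measurable_tsum_real {f : ℕ → X → ℝ} (hm : ∀ n, Measurable (f n))
    (h0 : ∀ n x, 0 ≤ f n x) (hs : ∀ x, Summable fun n => f n x) :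
    Measurable fun x => ∑' n, f n x := by
  have h : (fun x => ∑' n, f n x) = fun x => (∑' n, ENNReal.ofReal (f n x)).toReal := by
    funext x
    rw [← ENNReal.ofReal_tsum_of_nonneg (fun n => h0 n x) (hs x),
      ENNReal.toReal_ofReal (tsum_nonneg fun n => h0 n x)]
  rw [h]
  exact (Measurable.ennreal_tsum fun n => (hm n).ennreal_ofReal).ennreal_toReal

variable {γ : ℝ} (hγ0 : 0 ≤ γ) (hγ1 : γ < 1)
  {r : X → ℝ} (hr : Measurable r) {rmax : ℝ} (hr0 : ∀ x, 0 ≤ r x) (hrmax : ∀ x, r x ≤ rmax)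

include hγ0 hγ1 in
lemma summable_geom_mul {a : ℕ → ℝ} (h0 : ∀ n, 0 ≤ a n) {C : ℝ} (hC : ∀ n, a n ≤ C) :
    Summable fun n => γ ^ n * a n :=
  Summable.of_nonneg_of_le (fun n => mul_nonneg (pow_nonneg hγ0 n) (h0 n))
    (fun n => mul_le_mul_of_nonneg_left (hC n) (pow_nonneg hγ0 n))
    ((summable_geometric_of_lt_one hγ0 hγ1).mul_right C)

include hr hr0 hrmax in
lemma g_props (κ' : Kernel X X) [IsMarkovKernel κ'] (n : ℕ) (x : X) :
    0 ≤ ∫ y, r y ∂(kIter κ' n x) ∧ ∫ y, r y ∂(kIter κ' n x) ≤ rmax :=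
  ⟨integral_nonneg hr0, integral_le_of_bounds _ hr.aestronglyMeasurable hr0 hrmax⟩

include hγ0 hγ1 hr hr0 hrmax in
lemma summable_discVal (κ' : Kernel X X) [IsMarkovKernel κ'] (x : X) :
    Summable fun n => γ ^ n * ∫ y, r y ∂(kIter κ' n x) :=
  summable_geom_mul hγ0 hγ1 (fun n => (g_props hr hr0 hrmax κ' n x).1)
    (fun n => (g_props hr hr0 hrmax κ' n x).2)

include hγ0 hγ1 hr hr0 hrmax in
lemma discVal_nonneg (κ' : Kernel X X) [IsMarkovKernel κ'] (x : X) :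
    0 ≤ discVal κ' γ r x :=
  tsum_nonneg fun n => mul_nonneg (pow_nonneg hγ0 n) (g_props hr hr0 hrmax κ' n x).1

include hγ0 hγ1 hr hr0 hrmax in
lemma discVal_le (κ' : Kernel X X) [IsMarkovKernel κ'] (x : X) :
    discVal κ' γ r x ≤ rmax * (1 - γ)⁻¹ := by
  have h1 : discVal κ' γ r x ≤ ∑' n : ℕ, γ ^ n * rmax := by
    refine Summable.tsum_le_tsum (fun n => mul_le_mul_of_nonneg_left
      (g_props hr hr0 hrmax κ' n x).2 (pow_nonneg hγ0 n))
      (summable_discVal hγ0 hγ1 hr hr0 hrmax κ' x)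
      ((summable_geometric_of_lt_one hγ0 hγ1).mul_right rmax)
  calc discVal κ' γ r x ≤ ∑' n : ℕ, γ ^ n * rmax := h1
    _ = rmax * (1 - γ)⁻¹ := by
        rw [tsum_mul_right, tsum_geometric_of_lt_one hγ0 hγ1, mul_comm]

include hγ0 hγ1 hr hr0 hrmax in
lemma discVal_measurable (κ' : Kernel X X) [IsMarkovKernel κ'] :
    Measurable (discVal κ' γ r) :=
  measurable_tsum_real
    (fun n => (measurable_kint (kIter κ' n) hr).const_mul _)
    (fun n x => mul_nonneg (pow_nonneg hγ0 n) (g_props hr hr0 hrmax κ' n x).1)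
    (fun x => summable_discVal hγ0 hγ1 hr hr0 hrmax κ' x)

include hγ0 hγ1 hr hr0 hrmax in
/-- Interchange of `tsum` and integral for uniformly geometrically bounded nonnegative terms. -/
lemma tsum_integral_swap (ν : Measure X) [IsProbabilityMeasure ν] {f : ℕ → X → ℝ}
    (hm : ∀ n, Measurable (f n)) (h0 : ∀ n x, 0 ≤ f n x) {C : ℕ → ℝ}
    (hC : ∀ n x, f n x ≤ C n) (hCs : Summable C) :
    ∑' n, ∫ z, f n z ∂ν = ∫ z, ∑' n, f n z ∂ν := by
  refine integral_tsum_of_summable_integral_norm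
    (fun n => integrable_of_bounds ν (hm n).aestronglyMeasurable (h0 n) (hC n)) ?_
  refine Summable.of_nonneg_of_le (fun n => integral_nonneg fun z => norm_nonneg _)
    (fun n => ?_) hCs
  have : ∀ z, ‖f n z‖ ≤ C n := fun z => by
    rw [Real.norm_eq_abs, abs_of_nonneg (h0 n z)]; exact hC n z
  exact integral_le_of_bounds ν ((hm n).norm).aestronglyMeasurable
    (fun z => norm_nonneg _) this

include hγ0 hγ1 hr hr0 hrmax in
/-- The Bellman equation for the discounted value. -/
lemma bellman (κ' : Kernel X X) [IsMarkovKernel κ'] (x : X) :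
    discVal κ' γ r x = r x + γ * ∫ y, discVal κ' γ r y ∂κ' x := by
  have hsum := summable_discVal hγ0 hγ1 hr hr0 hrmax κ' x
  rw [discVal, Summable.tsum_eq_zero_add hsum]
  congr 1
  · rw [pow_zero, one_mul, kIter_zero, Kernel.id_apply,
      integral_dirac' r x hr.stronglyMeasurable]
  · have h1 : ∀ n : ℕ, γ ^ (n + 1) * ∫ y, r y ∂(kIter κ' (n + 1) x)
        = γ * (γ ^ n * ∫ z, ∫ y, r y ∂(kIter κ' n z) ∂κ' x) := by
      intro n
      have h2 : kIter κ' (n + 1) x = (κ' x).bind (kIter κ' n) := by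
        rw [kIter_succ', Kernel.comp_apply]
      rw [h2, integral_bind' (κ' x) (kIter κ' n) hr hr0 hrmax, pow_succ]
      ring
    rw [tsum_congr h1, tsum_mul_left]
    congr 1
    have h3 : ∀ n : ℕ, γ ^ n * ∫ z, ∫ y, r y ∂(kIter κ' n z) ∂κ' x
        = ∫ z, γ ^ n * ∫ y, r y ∂(kIter κ' n z) ∂κ' x := fun n =>
      (integral_const_mul _ _).symm
    rw [tsum_congr h3]
    exact tsum_integral_swap hγ0 hγ1 hr hr0 hrmax (κ' x)
      (fun n => (measurable_kint (kIter κ' n) hr).const_mul _)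
      (fun n z => mul_nonneg (pow_nonneg hγ0 n) (g_props hr hr0 hrmax κ' n z).1)
      (C := fun n => γ ^ n * rmax)
      (fun n z => mul_le_mul_of_nonneg_left (g_props hr hr0 hrmax κ' n z).2
        (pow_nonneg hγ0 n))
      ((summable_geometric_of_lt_one hγ0 hγ1).mul_right rmax)

include hγ0 hγ1 hr hr0 hrmax in
/-- The simulation-lemma sandwich: the true objective `J(κ')` is within
`γ·Σ γ^t ∫ u' dμ^{η'}_t` of the model-based return `Σ γ^t ∫ r dμ^{η'}_t`. -/
lemma sandwich (μ₀ : Measure X) [IsProbabilityMeasure μ₀]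
    (κ' η' : Kernel X X) [IsMarkovKernel κ'] [IsMarkovKernel η']
    (u' : X → ℝ) (hu'm : Measurable u') {Cu : ℝ} (hu'0 : ∀ x, 0 ≤ u' x)
    (hu'C : ∀ x, u' x ≤ Cu)
    (hgap' : ∀ x, |(∫ y, discVal κ' γ r y ∂η' x) - ∫ y, discVal κ' γ r y ∂κ' x| ≤ u' x) :
    (∑' t : ℕ, γ ^ t * ∫ x, r x ∂(marginal η' μ₀ t))
        - γ * ∑' t : ℕ, γ ^ t * ∫ x, u' x ∂(marginal η' μ₀ t) ≤ discJ κ' γ r μ₀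
    ∧ discJ κ' γ r μ₀ ≤ (∑' t : ℕ, γ ^ t * ∫ x, r x ∂(marginal η' μ₀ t))
        + γ * ∑' t : ℕ, γ ^ t * ∫ x, u' x ∂(marginal η' μ₀ t) := by
  set V : X → ℝ := discVal κ' γ r with hV
  set M : ℝ := rmax * (1 - γ)⁻¹ with hM
  have hVm : Measurable V := discVal_measurable hγ0 hγ1 hr hr0 hrmax κ'
  have hV0 : ∀ x, 0 ≤ V x := discVal_nonneg hγ0 hγ1 hr hr0 hrmax κ'
  have hVM : ∀ x, V x ≤ M := discVal_le hγ0 hγ1 hr hr0 hrmax κ'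
  set μt : ℕ → Measure X := marginal η' μ₀ with hμt
  set b : ℕ → ℝ := fun t => ∫ x, V x ∂μt t with hb
  set Rt : ℕ → ℝ := fun t => ∫ x, r x ∂μt t with hRt
  set Ut : ℕ → ℝ := fun t => ∫ x, u' x ∂μt t with hUt
  set c : ℕ → ℝ := fun t => γ ^ t * b t with hc
  set Wκ : X → ℝ := fun x => ∫ y, V y ∂κ' x with hWκ
  set Wη : X → ℝ := fun x => ∫ y, V y ∂η' x with hWη
  have hWκm : Measurable Wκ := measurable_kint κ' hVm
  have hWηm : Measurable Wη := measurable_kint η' hVm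
  have hWκ0 : ∀ x, 0 ≤ Wκ x := fun x => integral_nonneg hV0
  have hWη0 : ∀ x, 0 ≤ Wη x := fun x => integral_nonneg hV0
  have hWκM : ∀ x, Wκ x ≤ M := fun x =>
    integral_le_of_bounds _ hVm.aestronglyMeasurable hV0 hVM
  have hWηM : ∀ x, Wη x ≤ M := fun x =>
    integral_le_of_bounds _ hVm.aestronglyMeasurable hV0 hVM
  -- per-step decomposition
  have hbt : ∀ t, b t = Rt t + γ * ∫ x, Wκ x ∂μt t := by
    intro t
    have h1 : b t = ∫ x, (r x + γ * Wκ x) ∂μt t :=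
      integral_congr_ae (Filter.Eventually.of_forall fun x =>
        bellman hγ0 hγ1 hr hr0 hrmax κ' x)
    rw [h1, integral_add (integrable_of_bounds _ hr.aestronglyMeasurable hr0 hrmax)
      (((integrable_of_bounds _ hWκm.aestronglyMeasurable hWκ0 hWκM)).const_mul γ),
      integral_const_mul]
  have hbsucc : ∀ t, b (t + 1) = ∫ x, Wη x ∂μt t := by
    intro t
    show ∫ x, V x ∂(marginal η' μ₀ (t + 1)) = _
    rw [marginal_succ, integral_bind' _ _ hVm hV0 hVM]
  -- integrability over μt t
  have hIWκ : ∀ t, Integrable Wκ (μt t) := fun t =>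
    integrable_of_bounds _ hWκm.aestronglyMeasurable hWκ0 hWκM
  have hIWη : ∀ t, Integrable Wη (μt t) := fun t =>
    integrable_of_bounds _ hWηm.aestronglyMeasurable hWη0 hWηM
  have hstep : ∀ t, |b t - γ * b (t + 1) - Rt t| ≤ γ * Ut t := by
    intro t
    have h1 : b t - γ * b (t + 1) - Rt t
        = γ * ∫ x, (Wκ x - Wη x) ∂μt t := by
      rw [hbt t, hbsucc t, integral_sub (hIWκ t) (hIWη t)]; ring
    rw [h1, abs_mul, abs_of_nonneg hγ0]
    refine mul_le_mul_of_nonneg_left ?_ hγ0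
    calc |∫ x, (Wκ x - Wη x) ∂μt t| ≤ ∫ x, |Wκ x - Wη x| ∂μt t := by
          simpa [Real.norm_eq_abs] using
            norm_integral_le_integral_norm (μ := μt t) (fun x => Wκ x - Wη x)
      _ ≤ ∫ x, u' x ∂μt t := by
          refine integral_mono (((hIWκ t).sub (hIWη t)).abs)
            (integrable_of_bounds _ hu'm.aestronglyMeasurable hu'0 hu'C)
            (fun x => ?_)
          rw [abs_sub_comm]
          exact hgap' x
  -- bounds on the sequences
  have hb0M : ∀ t, 0 ≤ b t ∧ b t ≤ M := fun t =>
    ⟨integral_nonneg hV0, integral_le_of_bounds _ hVm.aestronglyMeasurable hV0 hVM⟩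
  have hR0M : ∀ t, 0 ≤ Rt t ∧ Rt t ≤ rmax := fun t =>
    ⟨integral_nonneg hr0, integral_le_of_bounds _ hr.aestronglyMeasurable hr0 hrmax⟩
  have hU0M : ∀ t, 0 ≤ Ut t ∧ Ut t ≤ Cu := fun t =>
    ⟨integral_nonneg hu'0, integral_le_of_bounds _ hu'm.aestronglyMeasurable hu'0 hu'C⟩
  have sR : Summable fun t => γ ^ t * Rt t :=
    summable_geom_mul hγ0 hγ1 (fun t => (hR0M t).1) (fun t => (hR0M t).2)
  have sU : Summable fun t => γ ^ t * Ut t :=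
    summable_geom_mul hγ0 hγ1 (fun t => (hU0M t).1) (fun t => (hU0M t).2)
  have sc : Summable c :=
    summable_geom_mul hγ0 hγ1 (fun t => (hb0M t).1) (fun t => (hb0M t).2)
  have sc' : Summable fun t => c (t + 1) := (summable_nat_add_iff 1).mpr sc
  have scd : Summable fun t => c t - c (t + 1) := sc.sub sc'
  -- telescoping
  have hclim : Tendsto c atTop (nhds 0) := by
    have h1 : Tendsto (fun t : ℕ => M * γ ^ t) atTop (nhds 0) := by
      simpa using (tendsto_pow_atTop_nhds_zero_of_lt_one hγ0 hγ1).const_mul M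
    refine squeeze_zero_norm (fun t => ?_) h1
    rw [Real.norm_eq_abs, hc, abs_mul, abs_of_nonneg (pow_nonneg hγ0 t),
      abs_of_nonneg (hb0M t).1, mul_comm]
    exact mul_le_mul_of_nonneg_right (hb0M t).2 (pow_nonneg hγ0 t)
  have htel : ∑' t, (c t - c (t + 1)) = c 0 := by
    refine tendsto_nhds_unique scd.hasSum.tendsto_sum_nat ?_
    have h1 : (fun T => ∑ t ∈ Finset.range T, (c t - c (t + 1)))
        = fun T => c 0 - c T := funext fun T => Finset.sum_range_sub' c T
    rw [h1]
    simpa using tendsto_const_nhds.sub hclim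
  have hc0 : c 0 = discJ κ' γ r μ₀ := by
    rw [hc]
    simp only [pow_zero, one_mul, hb]
    rw [show μt 0 = μ₀ from marginal_zero η' μ₀]
    rfl
  -- termwise bounds for the telescoping series
  have hlow : ∀ t, γ ^ t * Rt t - γ * (γ ^ t * Ut t) ≤ c t - c (t + 1) := by
    intro t
    have h1 : c t - c (t + 1) = γ ^ t * (b t - γ * b (t + 1)) := by
      simp only [hc]; ring
    have h2 := (abs_le.1 (hstep t)).1
    rw [h1]
    nlinarith [pow_nonneg hγ0 t, mul_le_mul_of_nonneg_left
      (show Rt t - γ * Ut t ≤ b t - γ * b (t + 1) by linarith) (pow_nonneg hγ0 t)]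
  have hup : ∀ t, c t - c (t + 1) ≤ γ ^ t * Rt t + γ * (γ ^ t * Ut t) := by
    intro t
    have h1 : c t - c (t + 1) = γ ^ t * (b t - γ * b (t + 1)) := by
      simp only [hc]; ring
    have h2 := (abs_le.1 (hstep t)).2
    rw [h1]
    nlinarith [pow_nonneg hγ0 t, mul_le_mul_of_nonneg_left
      (show b t - γ * b (t + 1) ≤ Rt t + γ * Ut t by linarith) (pow_nonneg hγ0 t)]
  constructor
  · have e1 : γ * ∑' t, γ ^ t * Ut t = ∑' t, γ * (γ ^ t * Ut t) := tsum_mul_left.symm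
    rw [← hc0, ← htel, e1, ← Summable.tsum_sub sR (sU.mul_left γ)]
    exact Summable.tsum_le_tsum hlow (sR.sub (sU.mul_left γ)) scd
  · have e1 : γ * ∑' t, γ ^ t * Ut t = ∑' t, γ * (γ ^ t * Ut t) := tsum_mul_left.symm
    rw [← hc0, ← htel, e1, ← Summable.tsum_add sR (sU.mul_left γ)]
    exact Summable.tsum_le_tsum hup scd (sR.add (sU.mul_left γ))

end Aux

/-- **Asymptotic optimality of the Actor-Simulator** (deterministic skeleton of the paper's
Theorem 4): if at each iteration `n` the policy `phat n` maximizes the uncertainty-penalized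
digital-twin objective `J̃ n p = Σ_t γ^t ∫ (r − λ·u n p) dμ^{η n p}_t` over policies, `pstar`
is optimal for the physical system, and the discounted uncertainty mass
`ε n = Σ_t γ^t ∫ u n pstar dμ^{η n pstar}_t` vanishes, then `J(κ (phat n)) → J(κ pstar)`. -/
theorem stmt11 {X : Type*} [MeasurableSpace X]
    (γ : ℝ) (hγ0 : 0 ≤ γ) (hγ1 : γ < 1)
    (r : X → ℝ) (hr : Measurable r)
    (rmax : ℝ) (hr0 : ∀ x, 0 ≤ r x) (hrmax : ∀ x, r x ≤ rmax)
    (μ₀ : Measure X) [IsProbabilityMeasure μ₀]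
    (lam : ℝ) (hlam : γ ≤ lam)
    {P : Type*} (κ : P → Kernel X X) (η : ℕ → P → Kernel X X)
    [∀ p, IsMarkovKernel (κ p)] [∀ n p, IsMarkovKernel (η n p)]
    (u : ℕ → P → X → ℝ) (hum : ∀ n p, Measurable (u n p))
    (hub : ∀ n p, ∃ C, ∀ x, |u n p x| ≤ C) (hu0 : ∀ n p x, 0 ≤ u n p x)
    (hgap : ∀ n p x, |(∫ y, discVal (κ p) γ r y ∂(η n p x))
      - ∫ y, discVal (κ p) γ r y ∂(κ p x)| ≤ u n p x)
    (tJ : ℕ → P → ℝ)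
    (htJ : ∀ n p, tJ n p
      = ∑' t : ℕ, γ ^ t * ∫ x, (r x - lam * u n p x) ∂(marginal (η n p) μ₀ t))
    (phat : ℕ → P) (hopt : ∀ n p, tJ n p ≤ tJ n (phat n))
    (pstar : P) (hstar : ∀ p, discJ (κ p) γ r μ₀ ≤ discJ (κ pstar) γ r μ₀)
    (eps : ℕ → ℝ)
    (heps : ∀ n, eps n
      = ∑' t : ℕ, γ ^ t * ∫ x, u n pstar x ∂(marginal (η n pstar) μ₀ t))
    (heps0 : Tendsto eps atTop (nhds 0)) :
    Tendsto (fun n => discJ (κ (phat n)) γ r μ₀) atTop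
      (nhds (discJ (κ pstar) γ r μ₀)) := by
  classical
  -- notation
  set R : ℕ → P → ℝ := fun n p => ∑' t : ℕ, γ ^ t * ∫ x, r x ∂(marginal (η n p) μ₀ t)
    with hR
  set U : ℕ → P → ℝ := fun n p => ∑' t : ℕ, γ ^ t * ∫ x, u n p x ∂(marginal (η n p) μ₀ t)
    with hU
  -- splitting the penalized objective
  have hub' : ∀ n p x, u n p x ≤ Classical.choose (hub n p) := fun n p x =>
    (abs_le.1 (Classical.choose_spec (hub n p) x)).2
  have hsplit : ∀ n p, tJ n p = R n p - lam * U n p := by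
    intro n p
    set C := Classical.choose (hub n p) with hC
    have h1 : ∀ t, ∫ x, (r x - lam * u n p x) ∂(marginal (η n p) μ₀ t)
        = (∫ x, r x ∂(marginal (η n p) μ₀ t))
          - lam * ∫ x, u n p x ∂(marginal (η n p) μ₀ t) := by
      intro t
      rw [integral_sub (integrable_of_bounds _ hr.aestronglyMeasurable hr0 hrmax)
        ((integrable_of_bounds _ (hum n p).aestronglyMeasurable (hu0 n p)
          (hub' n p)).const_mul lam), integral_const_mul]
    have sR : Summable fun t => γ ^ t * ∫ x, r x ∂(marginal (η n p) μ₀ t) :=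
      summable_geom_mul hγ0 hγ1 (fun t => integral_nonneg hr0)
        (fun t => integral_le_of_bounds _ hr.aestronglyMeasurable hr0 hrmax)
    have sU : Summable fun t => γ ^ t * ∫ x, u n p x ∂(marginal (η n p) μ₀ t) :=
      summable_geom_mul hγ0 hγ1 (fun t => integral_nonneg (hu0 n p))
        (fun t => integral_le_of_bounds _ (hum n p).aestronglyMeasurable (hu0 n p)
          (hub' n p))
    rw [htJ n p, hR, hU]
    simp only
    have h2 : ∀ t : ℕ, γ ^ t * ∫ x, (r x - lam * u n p x) ∂(marginal (η n p) μ₀ t)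
        = γ ^ t * ∫ x, r x ∂(marginal (η n p) μ₀ t)
          - lam * (γ ^ t * ∫ x, u n p x ∂(marginal (η n p) μ₀ t)) := by
      intro t; rw [h1 t]; ring
    rw [tsum_congr h2, Summable.tsum_sub sR (sU.mul_left lam), tsum_mul_left]
  have hUnn : ∀ n p, 0 ≤ U n p := by
    intro n p
    exact tsum_nonneg fun t => mul_nonneg (pow_nonneg hγ0 t)
      (integral_nonneg (hu0 n p))
  -- the sandwich
  have hsand : ∀ n p, R n p - γ * U n p ≤ discJ (κ p) γ r μ₀
      ∧ discJ (κ p) γ r μ₀ ≤ R n p + γ * U n p := by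
    intro n p
    exact sandwich hγ0 hγ1 hr hr0 hrmax μ₀ (κ p) (η n p) (u n p) (hum n p)
      (hu0 n p) (hub' n p) (hgap n p)
  -- pessimism: tJ n p ≤ J(κ p)
  have hA : ∀ n p, tJ n p ≤ discJ (κ p) γ r μ₀ := by
    intro n p
    have h1 : γ * U n p ≤ lam * U n p :=
      mul_le_mul_of_nonneg_right hlam (hUnn n p)
    have h2 := (hsand n p).1
    rw [hsplit n p]
    linarith
  -- near-optimism at pstar
  have hB : ∀ n, discJ (κ pstar) γ r μ₀ ≤ tJ n pstar + (γ + lam) * eps n := by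
    intro n
    have h1 := (hsand n pstar).2
    have h2 : eps n = U n pstar := heps n
    rw [hsplit n pstar, h2]
    linarith
  -- squeeze
  have hlow : ∀ n, discJ (κ pstar) γ r μ₀ - (γ + lam) * eps n
      ≤ discJ (κ (phat n)) γ r μ₀ := by
    intro n
    have h1 := hB n
    have h2 := hopt n pstar
    have h3 := hA n (phat n)
    linarith
  have hhigh : ∀ n, discJ (κ (phat n)) γ r μ₀ ≤ discJ (κ pstar) γ r μ₀ :=
    fun n => hstar (phat n)
  refine tendsto_of_tendsto_of_tendsto_of_le_of_le ?_ tendsto_const_nhds hlow hhigh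
  have h1 : Tendsto (fun n => discJ (κ pstar) γ r μ₀ - (γ + lam) * eps n) atTop
      (nhds (discJ (κ pstar) γ r μ₀ - (γ + lam) * 0)) :=
    tendsto_const_nhds.sub (heps0.const_mul (γ + lam))
  simpa using h1
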